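/- arXiv:1006.5134 — 2 statements merged into one kernel-verified Lean document; each statement's English description precedes it below -/
import Mathlib

section
/- For every integer p ≥ 1, the sum f(p) = Σ_{i=1}^{2p-1} (-1)^i C(2p,i) C(-2p, 2p-1-i) C(-2p, i-1) equals (-1)^p * 2 * (3p-2)! / ((2p-1) * ((p-1)!)^3). -/
/-- Generalized binomial coefficient `C(t,k) = t(t-1)⋯(t-k+1)/k!`. -/
def gchoose (t : ℚ) (k : ℕ) : ℚ := (∏ j ∈ Finset.range k, (t - j)) / (Nat.factorial k)


lemma facQ_pos (n : ℕ) : (0:ℚ) < (Nat.factorial n : ℚ) := by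
  exact_mod_cast n.factorial_pos

lemma facQ_ne (n : ℕ) : ((Nat.factorial n : ℚ)) ≠ 0 := (facQ_pos n).ne'

lemma fshift (a b : ℕ) (h : a = b + 1) :
    ((Nat.factorial a : ℚ)) = (a : ℚ) * (Nat.factorial b : ℚ) := by
  subst h; rw [Nat.factorial_succ]; push_cast; ring

lemma prod_desc (n k : ℕ) (h : k ≤ n) :
    (∏ j ∈ Finset.range k, ((n : ℚ) - j)) * (Nat.factorial (n - k) : ℚ)
      = (Nat.factorial n : ℚ) := by
  induction k with
  | zero => simp
  | succ k ih =>
    have hk : k ≤ n := by omega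
    rw [Finset.prod_range_succ]
    have h1 : ((Nat.factorial (n - k) : ℚ)) = ((n:ℚ) - k) * (Nat.factorial (n - (k+1)) : ℚ) := by
      rw [fshift (n-k) (n-(k+1)) (by omega)]
      have : ((n - k : ℕ) : ℚ) = (n:ℚ) - k := by
        push_cast [Nat.cast_sub hk]; ring
      rw [this]
    calc (∏ j ∈ Finset.range k, ((n : ℚ) - j)) * ((n:ℚ) - k) * (Nat.factorial (n - (k+1)) : ℚ)
        = (∏ j ∈ Finset.range k, ((n : ℚ) - j)) * (((n:ℚ) - k) * (Nat.factorial (n - (k+1)) : ℚ)) := by ring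
      _ = (∏ j ∈ Finset.range k, ((n : ℚ) - j)) * (Nat.factorial (n - k) : ℚ) := by rw [h1]
      _ = _ := ih hk

lemma gchoose_nat (n k : ℕ) (h : k ≤ n) :
    gchoose (n : ℚ) k = (Nat.factorial n : ℚ) / ((Nat.factorial k : ℚ) * (Nat.factorial (n - k) : ℚ)) := by
  unfold gchoose
  rw [div_eq_div_iff (facQ_ne k) (mul_ne_zero (facQ_ne k) (facQ_ne (n-k)))]
  linear_combination (Nat.factorial k : ℚ) * prod_desc n k h

lemma prod_neg (n k : ℕ) (h : 1 ≤ n) :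
    (∏ j ∈ Finset.range k, (-(n : ℚ) - j)) * (Nat.factorial (n - 1) : ℚ)
      = (-1)^k * (Nat.factorial (n + k - 1) : ℚ) := by
  induction k with
  | zero => simp
  | succ k ih =>
    rw [Finset.prod_range_succ]
    have h1 : ((Nat.factorial (n + (k+1) - 1) : ℚ)) = ((n:ℚ) + k) * (Nat.factorial (n + k - 1) : ℚ) := by
      rw [fshift (n + (k+1) - 1) (n + k - 1) (by omega)]
      have : ((n + (k+1) - 1 : ℕ) : ℚ) = (n:ℚ) + k := by
        push_cast [Nat.cast_sub (by omega : 1 ≤ n + (k+1))]; ring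
      rw [this]
    rw [h1]
    calc (∏ j ∈ Finset.range k, (-(n : ℚ) - j)) * (-(n:ℚ) - k) * (Nat.factorial (n - 1) : ℚ)
        = ((∏ j ∈ Finset.range k, (-(n : ℚ) - j)) * (Nat.factorial (n - 1) : ℚ)) * (-(n:ℚ) - k) := by ring
      _ = ((-1)^k * (Nat.factorial (n + k - 1) : ℚ)) * (-(n:ℚ) - k) := by rw [ih]
      _ = _ := by ring

lemma gchoose_neg (n k : ℕ) (h : 1 ≤ n) :
    gchoose (-(n : ℚ)) k = (-1)^k * (Nat.factorial (n + k - 1) : ℚ) / ((Nat.factorial k : ℚ) * (Nat.factorial (n - 1) : ℚ)) := by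
  unfold gchoose
  rw [div_eq_div_iff (facQ_ne k) (mul_ne_zero (facQ_ne k) (facQ_ne (n-1)))]
  linear_combination (Nat.factorial k : ℚ) * prod_neg n k h

def Tf (p i : ℕ) : ℚ :=
  (-1)^i * (Nat.factorial (2*p) : ℚ) * (Nat.factorial (4*p-2-i) : ℚ) * (Nat.factorial (2*p+i-2) : ℚ) /
    ((Nat.factorial i : ℚ) * (Nat.factorial (2*p-i) : ℚ) * (Nat.factorial (2*p-1-i) : ℚ) *
      (Nat.factorial (i-1) : ℚ) * (Nat.factorial (2*p-1) : ℚ)^2)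

def Pol (p i : ℕ) : ℚ :=
  (4*(p:ℚ)-16*(p:ℚ)^2-196*(p:ℚ)^3+48*(p:ℚ)^4+2256*(p:ℚ)^5+2752*(p:ℚ)^6) * (i:ℚ)
  + (2+6*(p:ℚ)+48*(p:ℚ)^2+28*(p:ℚ)^3-1784*(p:ℚ)^4-5024*(p:ℚ)^5-2752*(p:ℚ)^6) * (i:ℚ)^2
  + (-5-7*(p:ℚ)+106*(p:ℚ)^2+724*(p:ℚ)^3+2736*(p:ℚ)^4+2768*(p:ℚ)^5) * (i:ℚ)^3
  + (2-36*(p:ℚ)-258*(p:ℚ)^2-716*(p:ℚ)^3-1000*(p:ℚ)^4) * (i:ℚ)^4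
  + (4+50*(p:ℚ)+134*(p:ℚ)^2+160*(p:ℚ)^3) * (i:ℚ)^5
  + (-4-18*(p:ℚ)-14*(p:ℚ)^2) * (i:ℚ)^6
  + (1+(p:ℚ)) * (i:ℚ)^7

def Gf (p i : ℕ) : ℚ :=
  Pol p i * (-1)^i * ((2*p+2-i : ℕ) : ℚ) * (Nat.factorial (2*p) : ℚ) * (Nat.factorial (4*p-2-i) : ℚ) *
      (Nat.factorial (2*p+i-2) : ℚ) /
    ((Nat.factorial i : ℚ) * (Nat.factorial (i-1) : ℚ) * (Nat.factorial (2*p-1) : ℚ)^2 *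
      (Nat.factorial (2*p+2-i) : ℚ)^2)

lemma T_eq (p i : ℕ) (hp : 1 ≤ p) (h1 : 1 ≤ i) (h2 : i ≤ 2*p-1) :
    (-1 : ℚ) ^ i * gchoose (2 * p) i * gchoose (-2 * p) (2 * p - 1 - i) *
        gchoose (-2 * p) (i - 1) = Tf p i := by
  have e1 : (2 * (p:ℚ)) = ((2*p : ℕ) : ℚ) := by push_cast; ring
  have e2 : (-2 * (p:ℚ)) = -((2*p : ℕ) : ℚ) := by push_cast; ring
  rw [e1, e2, gchoose_nat (2*p) i (by omega), gchoose_neg (2*p) (2*p-1-i) (by omega),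
      gchoose_neg (2*p) (i-1) (by omega)]
  rw [show 2*p + (2*p-1-i) - 1 = 4*p-2-i from by omega,
      show 2*p + (i-1) - 1 = 2*p+i-2 from by omega]
  have hs : (-1:ℚ)^(2*p-1-i) * (-1:ℚ)^(i-1) = 1 := by
    rw [← pow_add, show (2*p-1-i) + (i-1) = 2*(p-1) from by omega, pow_mul]
    norm_num
  have expand : (-1:ℚ) ^ i *
        ((Nat.factorial (2*p) : ℚ) / ((Nat.factorial i : ℚ) * (Nat.factorial (2*p-i) : ℚ))) *
        ((-1:ℚ)^(2*p-1-i) * (Nat.factorial (4*p-2-i) : ℚ) /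
          ((Nat.factorial (2*p-1-i) : ℚ) * (Nat.factorial (2*p-1) : ℚ))) *
        ((-1:ℚ)^(i-1) * (Nat.factorial (2*p+i-2) : ℚ) /
          ((Nat.factorial (i-1) : ℚ) * (Nat.factorial (2*p-1) : ℚ)))
      = ((-1:ℚ)^(2*p-1-i) * (-1:ℚ)^(i-1)) * Tf p i := by
    rw [Tf]; ring
  rw [expand, hs, one_mul]
set_option maxHeartbeats 2000000 in
lemma cert1 (p i : ℕ) (hp : 2 ≤ p) (h1 : 1 ≤ i) (h2 : i ≤ 2*p-1) :
    4*(((2*(p:ℚ)+1)*(p:ℚ)^3) * Tf (p+1) i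
        + ((3*(p:ℚ)+1)*(3*(p:ℚ))*(3*(p:ℚ)-1)*(2*(p:ℚ)-1)) * Tf p i)
    = Gf p (i+1) - Gf p i := by
  simp only [Tf, Gf, Pol]
  rw [show 2*(p+1) = 2*p+2 from by ring, show 4*(p+1)-2-i = 4*p+2-i from by omega,
      show 2*p+2+i-2 = 2*p+i from by omega,
      show 2*p+2-1-i = 2*p+1-i from by omega, show 2*p+2-1 = 2*p+1 from by omega,
      show 2*p+2-(i+1) = 2*p+1-i from by omega, show 4*p-2-(i+1) = 4*p-3-i from by omega,
      show 2*p+(i+1)-2 = 2*p+i-1 from by omega, show (i+1)-1 = i from by omega]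
  rw [fshift (2*p+2) (2*p+1) (by omega), fshift (2*p+1) (2*p) (by omega),
      fshift (2*p) (2*p-1) (by omega),
      fshift (4*p+2-i) (4*p+1-i) (by omega), fshift (4*p+1-i) (4*p-i) (by omega),
      fshift (4*p-i) (4*p-1-i) (by omega), fshift (4*p-1-i) (4*p-2-i) (by omega),
      fshift (4*p-2-i) (4*p-3-i) (by omega),
      fshift (2*p+i) (2*p+i-1) (by omega), fshift (2*p+i-1) (2*p+i-2) (by omega),
      fshift (2*p+2-i) (2*p+1-i) (by omega), fshift (2*p+1-i) (2*p-i) (by omega),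
      fshift (2*p-i) (2*p-1-i) (by omega),
      fshift (i+1) i (by omega), fshift i (i-1) (by omega)]
  have c1 : ((2*p+2-i : ℕ) : ℚ) = 2*(p:ℚ)+2-i := by
    push_cast [Nat.cast_sub (show i ≤ 2*p+2 by omega)]; ring
  have c2 : ((2*p+1-i : ℕ) : ℚ) = 2*(p:ℚ)+1-i := by
    push_cast [Nat.cast_sub (show i ≤ 2*p+1 by omega)]; ring
  have c3 : ((2*p-i : ℕ) : ℚ) = 2*(p:ℚ)-i := by
    push_cast [Nat.cast_sub (show i ≤ 2*p by omega)]; ring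
  have c4 : ((4*p+2-i : ℕ) : ℚ) = 4*(p:ℚ)+2-i := by
    push_cast [Nat.cast_sub (show i ≤ 4*p+2 by omega)]; ring
  have c5 : ((4*p+1-i : ℕ) : ℚ) = 4*(p:ℚ)+1-i := by
    push_cast [Nat.cast_sub (show i ≤ 4*p+1 by omega)]; ring
  have c6 : ((4*p-i : ℕ) : ℚ) = 4*(p:ℚ)-i := by
    push_cast [Nat.cast_sub (show i ≤ 4*p by omega)]; ring
  have c7 : ((4*p-1-i : ℕ) : ℚ) = 4*(p:ℚ)-1-i := by
    push_cast [Nat.cast_sub (show i ≤ 4*p-1 by omega), Nat.cast_sub (show 1 ≤ 4*p by omega)]; ring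
  have c8 : ((4*p-2-i : ℕ) : ℚ) = 4*(p:ℚ)-2-i := by
    push_cast [Nat.cast_sub (show i ≤ 4*p-2 by omega), Nat.cast_sub (show 2 ≤ 4*p by omega)]; ring
  have c9 : ((2*p+i : ℕ) : ℚ) = 2*(p:ℚ)+i := by push_cast; ring
  have c10 : ((2*p+i-1 : ℕ) : ℚ) = 2*(p:ℚ)+i-1 := by
    push_cast [Nat.cast_sub (show 1 ≤ 2*p+i by omega)]; ring
  have c11 : ((2*p+2 : ℕ) : ℚ) = 2*(p:ℚ)+2 := by push_cast; ring
  have c12 : ((2*p+1 : ℕ) : ℚ) = 2*(p:ℚ)+1 := by push_cast; ring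
  have c13 : ((2*p : ℕ) : ℚ) = 2*(p:ℚ) := by push_cast; ring
  rw [c1, c2, c3, c4, c5, c6, c7, c8, c9, c10, c11, c12, c13]
  have hX := facQ_ne (i-1)
  have hY := facQ_ne (2*p-1-i)
  have hF := facQ_ne (2*p-1)
  have hip : (1:ℚ) ≤ (i:ℚ) := by exact_mod_cast h1
  have hi2 : (i:ℚ) + 1 ≤ 2*(p:ℚ) := by exact_mod_cast (show i + 1 ≤ 2*p by omega)
  have hpq : (2:ℚ) ≤ (p:ℚ) := by exact_mod_cast hp
  have n1 : (i:ℚ) ≠ 0 := by linarith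
  have n2 : (i:ℚ) + 1 ≠ 0 := by linarith
  have n3 : 2*(p:ℚ) - i ≠ 0 := by linarith
  have n4 : 2*(p:ℚ)+1-i ≠ 0 := by linarith
  have n5 : 2*(p:ℚ)+2-i ≠ 0 := by linarith
  have n6 : (p:ℚ) ≠ 0 := by linarith
  have n7 : 2*(p:ℚ)+1 ≠ 0 := by linarith
  have n8 : 2*(p:ℚ)+2 ≠ 0 := by linarith
  have c14 : ((i+1 : ℕ) : ℚ) = (i:ℚ)+1 := by push_cast; ring
  rw [c14]
  have n9 : 2*((p:ℚ)+1) - i ≠ 0 := by linarith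
  field_simp
  ring

set_option maxHeartbeats 1000000 in
lemma cert2a (p : ℕ) (hp : 2 ≤ p) :
    4*(((2*(p:ℚ)+1)*(p:ℚ)^3) * Tf (p+1) (2*p)) = Gf p (2*p+1) - Gf p (2*p) := by
  simp only [Tf, Gf, Pol]
  rw [show 2*(p+1) = 2*p+2 from by ring, show 4*(p+1)-2-2*p = 2*p+2 from by omega,
      show 2*p+2+2*p-2 = 4*p from by omega, show 2*p+2-2*p = 2 from by omega,
      show 2*p+2-1-2*p = 1 from by omega, show 2*p+2-1 = 2*p+1 from by omega,
      show 2*p+2-(2*p+1) = 1 from by omega, show 4*p-2-(2*p+1) = 2*p-3 from by omega,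
      show 2*p+(2*p+1)-2 = 4*p-1 from by omega, show (2*p+1)-1 = 2*p from by omega,
      show 4*p-2-(2*p) = 2*p-2 from by omega, show 2*p+2*p-2 = 4*p-2 from by omega]
  rw [fshift (2*p+2) (2*p+1) (by omega), fshift (2*p+1) (2*p) (by omega),
      fshift (2*p) (2*p-1) (by omega), fshift (2*p-1) (2*p-2) (by omega),
      fshift (2*p-2) (2*p-3) (by omega),
      fshift (4*p) (4*p-1) (by omega), fshift (4*p-1) (4*p-2) (by omega)]
  have s1 : (-1:ℚ)^(2*p) = 1 := by rw [pow_mul]; norm_num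
  have s2 : (-1:ℚ)^(2*p+1) = -1 := by rw [pow_succ, s1]; norm_num
  rw [s1, s2]
  have c1 : ((2*p+2 : ℕ) : ℚ) = 2*(p:ℚ)+2 := by push_cast; ring
  have c2 : ((2*p+1 : ℕ) : ℚ) = 2*(p:ℚ)+1 := by push_cast; ring
  have c3 : ((2*p : ℕ) : ℚ) = 2*(p:ℚ) := by push_cast; ring
  have c4 : ((2*p-1 : ℕ) : ℚ) = 2*(p:ℚ)-1 := by
    push_cast [Nat.cast_sub (show 1 ≤ 2*p by omega)]; ring
  have c5 : ((2*p-2 : ℕ) : ℚ) = 2*(p:ℚ)-2 := by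
    push_cast [Nat.cast_sub (show 2 ≤ 2*p by omega)]; ring
  have c6 : ((4*p : ℕ) : ℚ) = 4*(p:ℚ) := by push_cast; ring
  have c7 : ((4*p-1 : ℕ) : ℚ) = 4*(p:ℚ)-1 := by
    push_cast [Nat.cast_sub (show 1 ≤ 4*p by omega)]; ring
  have c8 : ((1 : ℕ) : ℚ) = 1 := by norm_num
  rw [c1, c2, c3, c4, c5, c6, c7, c8]
  have hB := facQ_ne (2*p-3)
  have hD := facQ_ne (4*p-2)
  have hpq : (2:ℚ) ≤ (p:ℚ) := by exact_mod_cast hp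
  have n1 : (p:ℚ) ≠ 0 := by linarith
  have n2 : 2*(p:ℚ)+1 ≠ 0 := by linarith
  have n3 : 2*(p:ℚ)+2 ≠ 0 := by linarith
  have n4 : 2*(p:ℚ) ≠ 0 := by linarith
  have n5 : 2*(p:ℚ)-1 ≠ 0 := by linarith
  have n6 : 2*(p:ℚ)-2 ≠ 0 := by linarith
  have n7 : (p:ℚ)-1 ≠ 0 := by linarith
  norm_num [Nat.factorial]
  field_simp
  ring

set_option maxHeartbeats 1000000 in
lemma cert2b (p : ℕ) (hp : 2 ≤ p) :
    4*(((2*(p:ℚ)+1)*(p:ℚ)^3) * Tf (p+1) (2*p+1)) = Gf p (2*p+2) - Gf p (2*p+1) := by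
  simp only [Tf, Gf, Pol]
  rw [show 2*(p+1) = 2*p+2 from by ring, show 4*(p+1)-2-(2*p+1) = 2*p+1 from by omega,
      show 2*p+2+(2*p+1)-2 = 4*p+1 from by omega, show 2*p+2-(2*p+1) = 1 from by omega,
      show 2*p+2-1-(2*p+1) = 0 from by omega,
      show (2*p+1)-1 = 2*p from by omega,
      show 2*p+2-(2*p+2) = 0 from by omega, show 4*p-2-(2*p+2) = 2*p-4 from by omega,
      show 2*p+(2*p+2)-2 = 4*p from by omega, show (2*p+2)-1 = 2*p+1 from by omega,
      show 4*p-2-(2*p+1) = 2*p-3 from by omega, show 2*p+(2*p+1)-2 = 4*p-1 from by omega]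
  rw [fshift (2*p+2) (2*p+1) (by omega), fshift (2*p+1) (2*p) (by omega),
      fshift (2*p) (2*p-1) (by omega), fshift (2*p-1) (2*p-2) (by omega),
      fshift (2*p-2) (2*p-3) (by omega),
      fshift (4*p+1) (4*p) (by omega), fshift (4*p) (4*p-1) (by omega),
      fshift (4*p-1) (4*p-2) (by omega)]
  have s1 : (-1:ℚ)^(2*p) = 1 := by rw [pow_mul]; norm_num
  have s2 : (-1:ℚ)^(2*p+1) = -1 := by rw [pow_succ, s1]; norm_num
  have s3 : (-1:ℚ)^(2*p+2) = 1 := by rw [pow_succ, s2]; norm_num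
  rw [s2, s3]
  have c1 : ((2*p+2 : ℕ) : ℚ) = 2*(p:ℚ)+2 := by push_cast; ring
  have c2 : ((2*p+1 : ℕ) : ℚ) = 2*(p:ℚ)+1 := by push_cast; ring
  have c3 : ((2*p : ℕ) : ℚ) = 2*(p:ℚ) := by push_cast; ring
  have c4 : ((2*p-1 : ℕ) : ℚ) = 2*(p:ℚ)-1 := by
    push_cast [Nat.cast_sub (show 1 ≤ 2*p by omega)]; ring
  have c5 : ((2*p-2 : ℕ) : ℚ) = 2*(p:ℚ)-2 := by
    push_cast [Nat.cast_sub (show 2 ≤ 2*p by omega)]; ring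
  have c6 : ((4*p+1 : ℕ) : ℚ) = 4*(p:ℚ)+1 := by push_cast; ring
  have c7 : ((4*p : ℕ) : ℚ) = 4*(p:ℚ) := by push_cast; ring
  have c8 : ((4*p-1 : ℕ) : ℚ) = 4*(p:ℚ)-1 := by
    push_cast [Nat.cast_sub (show 1 ≤ 4*p by omega)]; ring
  rw [c1, c2, c3, c4, c5, c6, c7, c8]
  have hB := facQ_ne (2*p-3)
  have hD := facQ_ne (4*p-2)
  have hpq : (2:ℚ) ≤ (p:ℚ) := by exact_mod_cast hp
  have n1 : (p:ℚ) ≠ 0 := by linarith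
  have n2 : 2*(p:ℚ)+1 ≠ 0 := by linarith
  have n3 : 2*(p:ℚ)+2 ≠ 0 := by linarith
  have n4 : 2*(p:ℚ) ≠ 0 := by linarith
  have n5 : 2*(p:ℚ)-1 ≠ 0 := by linarith
  have n6 : 2*(p:ℚ)-2 ≠ 0 := by linarith
  have n7 : (p:ℚ)-1 ≠ 0 := by linarith
  norm_num [Nat.factorial]
  field_simp
  ring

def Rh (p : ℕ) : ℚ :=
  (-1 : ℚ) ^ p * 2 * (Nat.factorial (3 * p - 2)) /
    ((2 * (p : ℚ) - 1) * (Nat.factorial (p - 1) : ℚ) ^ 3)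

def Sg (p : ℕ) : ℚ :=
  ∑ i ∈ Finset.Icc 1 (2 * p - 1),
    (-1 : ℚ) ^ i * gchoose (2 * p) i * gchoose (-2 * p) (2 * p - 1 - i) *
      gchoose (-2 * p) (i - 1)


lemma Gf_one (p : ℕ) : Gf p 1 = 0 := by
  have h : Pol p 1 = 0 := by simp [Pol]; ring
  simp [Gf, h]

lemma Gf_top (p : ℕ) : Gf p (2*p+2) = 0 := by
  simp [Gf]

lemma telescope (p : ℕ) (hp : 2 ≤ p) :
    ∑ i ∈ Finset.Icc 1 (2*p+1), (Gf p (i+1) - Gf p i) = 0 := by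
  have h : ∀ n : ℕ, ∑ i ∈ Finset.Icc 1 n, (Gf p (i+1) - Gf p i) = Gf p (n+1) - Gf p 1 := by
    intro n
    induction n with
    | zero => simp
    | succ n ih =>
      rw [Finset.sum_Icc_succ_top (by omega), ih]
      ring
  rw [h, Gf_top, Gf_one]; ring

lemma peel (f : ℕ → ℚ) (p : ℕ) (hp : 2 ≤ p) :
    ∑ i ∈ Finset.Icc 1 (2*p+1), f i
      = (∑ i ∈ Finset.Icc 1 (2*p-1), f i) + f (2*p) + f (2*p+1) := by
  rw [Finset.sum_Icc_succ_top (by omega : 1 ≤ 2*p+1),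
      show 2*p = (2*p-1)+1 from by omega,
      Finset.sum_Icc_succ_top (by omega : 1 ≤ (2*p-1)+1)]
  simp

lemma recS (p : ℕ) (hp : 2 ≤ p) :
    (2*(p:ℚ)+1)*(p:ℚ)^3 * (∑ i ∈ Finset.Icc 1 (2*(p+1)-1), Tf (p+1) i)
    + (3*(p:ℚ)+1)*(3*(p:ℚ))*(3*(p:ℚ)-1)*(2*(p:ℚ)-1) * (∑ i ∈ Finset.Icc 1 (2*p-1), Tf p i)
    = 0 := by
  have h21 : 2*(p+1)-1 = 2*p+1 := by omega
  rw [h21, peel (Tf (p+1)) p hp]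
  have key : ∑ i ∈ Finset.Icc 1 (2*p-1),
      (4*(((2*(p:ℚ)+1)*(p:ℚ)^3) * Tf (p+1) i
        + ((3*(p:ℚ)+1)*(3*(p:ℚ))*(3*(p:ℚ)-1)*(2*(p:ℚ)-1)) * Tf p i))
      = ∑ i ∈ Finset.Icc 1 (2*p-1), (Gf p (i+1) - Gf p i) := by
    apply Finset.sum_congr rfl
    intro i hi
    rw [Finset.mem_Icc] at hi
    exact cert1 p i hp hi.1 hi.2
  have tel := telescope p hp
  rw [peel (fun i => Gf p (i+1) - Gf p i) p hp] at tel
  have h2a := cert2a p hp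
  have h2b := cert2b p hp
  have expand : ∑ i ∈ Finset.Icc 1 (2*p-1),
      (4*(((2*(p:ℚ)+1)*(p:ℚ)^3) * Tf (p+1) i
        + ((3*(p:ℚ)+1)*(3*(p:ℚ))*(3*(p:ℚ)-1)*(2*(p:ℚ)-1)) * Tf p i))
      = 4*((2*(p:ℚ)+1)*(p:ℚ)^3) * (∑ i ∈ Finset.Icc 1 (2*p-1), Tf (p+1) i)
        + 4*((3*(p:ℚ)+1)*(3*(p:ℚ))*(3*(p:ℚ)-1)*(2*(p:ℚ)-1)) * (∑ i ∈ Finset.Icc 1 (2*p-1), Tf p i) := by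
    rw [Finset.mul_sum, Finset.mul_sum, ← Finset.sum_add_distrib]
    apply Finset.sum_congr rfl
    intro i _
    ring
  rw [expand] at key
  linarith [key, tel, h2a, h2b]


lemma recR (p : ℕ) (hp : 1 ≤ p) :
    (2*(p:ℚ)+1)*(p:ℚ)^3 * Rh (p+1)
    + (3*(p:ℚ)+1)*(3*(p:ℚ))*(3*(p:ℚ)-1)*(2*(p:ℚ)-1) * Rh p = 0 := by
  simp only [Rh]
  rw [show 3*(p+1)-2 = 3*p+1 from by omega, show (p+1)-1 = p from by omega]
  rw [fshift (3*p+1) (3*p) (by omega), fshift (3*p) (3*p-1) (by omega),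
      fshift (3*p-1) (3*p-2) (by omega), fshift p (p-1) (by omega)]
  rw [pow_succ]
  have c1 : ((3*p+1 : ℕ) : ℚ) = 3*(p:ℚ)+1 := by push_cast; ring
  have c2 : ((3*p : ℕ) : ℚ) = 3*(p:ℚ) := by push_cast; ring
  have c3 : ((3*p-1 : ℕ) : ℚ) = 3*(p:ℚ)-1 := by
    push_cast [Nat.cast_sub (show 1 ≤ 3*p by omega)]; ring
  have c4 : ((p+1 : ℕ) : ℚ) = (p:ℚ)+1 := by push_cast; ring
  rw [c1, c2, c3, c4]
  have hA := facQ_ne (3*p-2)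
  have hB := facQ_ne (p-1)
  have hpq : (1:ℚ) ≤ (p:ℚ) := by exact_mod_cast hp
  have n1 : (p:ℚ) ≠ 0 := by linarith
  have n2 : 2*(p:ℚ)-1 ≠ 0 := by linarith
  have n3 : 2*(p:ℚ)+1 ≠ 0 := by linarith
  have n4 : 2*((p:ℚ)+1)-1 ≠ 0 := by linarith
  field_simp
  ring



lemma Sg_Tf (p : ℕ) (hp : 1 ≤ p) : Sg p = ∑ i ∈ Finset.Icc 1 (2*p-1), Tf p i := by
  apply Finset.sum_congr rfl
  intro i hi
  rw [Finset.mem_Icc] at hi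
  exact T_eq p i hp hi.1 hi.2

lemma base1 : Sg 1 = Rh 1 := by
  unfold Sg Rh
  norm_num [gchoose, Nat.factorial]

lemma base2 : Sg 2 = Rh 2 := by
  unfold Sg Rh
  rw [show 2*2-1 = 3 from rfl, show Finset.Icc 1 3 = {1, 2, 3} from rfl]
  rw [Finset.sum_insert (by decide), Finset.sum_insert (by decide), Finset.sum_singleton]
  norm_num [gchoose, Finset.prod_range_succ, Nat.factorial]

lemma main (p : ℕ) (hp : 1 ≤ p) : Sg p = Rh p := by
  induction p, hp using Nat.le_induction with
  | base => exact base1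
  | succ p hp ih =>
    rcases Nat.lt_or_ge p 2 with h2 | h2
    · interval_cases p
      · exact base2
    · have hS := recS p h2
      have hR := recR p (by omega)
      rw [← Sg_Tf (p+1) (by omega), ← Sg_Tf p (by omega)] at hS
      have hpq : (2:ℚ) ≤ (p:ℚ) := by exact_mod_cast h2
      have hA : (2*(p:ℚ)+1)*(p:ℚ)^3 ≠ 0 := by positivity
      apply mul_left_cancel₀ hA
      rw [ih] at hS
      linarith [hS, hR]

/-- For every integer `p ≥ 1`,
`f(p) = ∑_{i=1}^{2p-1} (-1)^i C(2p,i) C(-2p,2p-1-i) C(-2p,i-1)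
      = (-1)^p · 2 · (3p-2)! / ((2p-1) ((p-1)!)^3)`. -/
theorem stmt2 (p : ℕ) (hp : 1 ≤ p) :
    ∑ i ∈ Finset.Icc 1 (2 * p - 1),
      (-1 : ℚ) ^ i * gchoose (2 * p) i * gchoose (-2 * p) (2 * p - 1 - i) *
        gchoose (-2 * p) (i - 1)
    = (-1 : ℚ) ^ p * 2 * (Nat.factorial (3 * p - 2)) /
        ((2 * (p : ℚ) - 1) * (Nat.factorial (p - 1) : ℚ) ^ 3) := by
  exact main p hp
end

section
/- For every integer p ≥ 2, the sum f(p) = Σ_{i=1}^{2p-1} (-1)^i C(2p,i) C(-2p, 2p-1-i) C(-2p, i-1) satisfies the recurrence 3(3p-4)(2p-3)(3p-2) * f(p-1) + (2p-1)(p-1)^2 * f(p) = 0. -/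
/-- `f(p) = ∑_{i=1}^{2p-1} (-1)^i C(2p,i) C(-2p,2p-1-i) C(-2p,i-1)`. -/
def f (p : ℕ) : ℚ :=
  ∑ i ∈ Finset.Icc 1 (2 * p - 1),
    (-1 : ℚ) ^ i * gchoose (2 * p) i * gchoose (-2 * p) (2 * p - 1 - i) *
      gchoose (-2 * p) (i - 1)

lemma gchoose_zero (t : ℚ) : gchoose t 0 = 1 := by simp [gchoose]

lemma gchoose_one (t : ℚ) : gchoose t 1 = t := by
  simp [gchoose, Finset.prod_range_one, Nat.factorial]

lemma gchoose_two (t : ℚ) : gchoose t 2 = t*(t-1)/2 := by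
  simp [gchoose, Finset.prod_range_succ, Nat.factorial]

lemma gchoose_three (t : ℚ) : gchoose t 3 = t*(t-1)*(t-2)/6 := by
  simp only [gchoose, Finset.prod_range_succ, Finset.prod_range_zero]
  norm_num [Nat.factorial]

lemma gchoose_succ (t : ℚ) (k : ℕ) :
    gchoose t (k+1) = gchoose t k * (t - k) / (k+1) := by
  have h1 : ((k+1:ℕ).factorial : ℚ) = (k.factorial : ℚ) * (k+1) := by
    rw [Nat.factorial_succ]; push_cast; ring
  have hk : ((k.factorial : ℚ)) ≠ 0 := by positivity
  simp only [gchoose, Finset.prod_range_succ]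
  push_cast [h1]
  field_simp

lemma gchoose_two_step (t : ℚ) (k : ℕ) :
    gchoose t (k+2) * (((k:ℚ)+1) * ((k:ℚ)+2)) = gchoose (t-2) k * (t * (t-1)) := by
  have hp : (∏ j ∈ Finset.range (k+2), (t - j)) =
      t * (t-1) * ∏ j ∈ Finset.range k, ((t-2) - j) := by
    rw [Finset.prod_range_succ', Finset.prod_range_succ']
    rw [Finset.prod_congr rfl (fun j _ => show t - ((j:ℕ)+1+1:ℕ) = (t-2) - j by push_cast; ring)]
    push_cast
    ring
  have h1 : ((k+2:ℕ).factorial : ℚ) = (k.factorial : ℚ) * ((k+1) * (k+2)) := by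
    rw [Nat.factorial_succ, Nat.factorial_succ]; push_cast; ring
  have hk : ((k.factorial : ℚ)) ≠ 0 := by positivity
  simp only [gchoose, hp]
  push_cast [h1]
  field_simp

lemma gchoose_natCast (n k : ℕ) : gchoose n k = n.choose k := by
  induction k with
  | zero => simp [gchoose]
  | succ k ih =>
    rw [gchoose_succ, ih]
    rcases le_or_gt (k+1) n with h | h
    · have h0 := Nat.choose_succ_right_eq n k
      have hnk : ((n - k : ℕ) : ℚ) = (n : ℚ) - k :=
        Nat.cast_sub (by omega)
      have h2 : (n.choose (k+1) : ℚ) * (k+1) = (n.choose k : ℚ) * ((n:ℚ) - k) := by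
        rw [← hnk]; exact_mod_cast congrArg (Nat.cast : ℕ → ℚ) h0
      have hk1 : ((k:ℚ)+1) ≠ 0 := by positivity
      field_simp
      linarith [h2]
    · rw [Nat.choose_eq_zero_of_lt h]
      rcases eq_or_lt_of_le (Nat.lt_succ_iff.mp h) with he | hlt
      · subst he; simp
      · rw [Nat.choose_eq_zero_of_lt hlt]; simp

def Np (q i : ℚ) : ℚ :=
    (2*q-8*q^2-98*q^3+24*q^4+1128*q^5+1376*q^6) * i
  + (1+3*q+24*q^2+14*q^3-892*q^4-2512*q^5-1376*q^6) * i^2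
  + (-5/2-7/2*q+53*q^2+362*q^3+1368*q^4+1384*q^5) * i^3
  + (1-18*q-129*q^2-358*q^3-500*q^4) * i^4
  + (2+25*q+67*q^2+80*q^3) * i^5
  + (-2-9*q-7*q^2) * i^6
  + (1/2+1/2*q) * i^7

def Rr (q i : ℚ) : ℚ := Np q i / (2*q*(i-2*q)*(i-2*q-1)^2*(i-2*q-2))

set_option maxHeartbeats 2000000 in
lemma key (m c : ℕ) (Q : ℚ) (hQ : 2*Q = (m:ℚ) + (c:ℚ) + 3) :
    ((2*Q+1)*Q^2) *
      ((-1:ℚ)^(m+1) * gchoose (2*(Q+1)) (m+1) * gchoose (-2*(Q+1)) (c+3) *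
        gchoose (-2*(Q+1)) m)
    + (3*(3*Q-1)*(2*Q-1)*(3*Q+1)) *
      ((-1:ℚ)^(m+1) * gchoose (2*Q) (m+1) * gchoose (-2*Q) (c+1) *
        gchoose (-2*Q) m)
    = Rr Q ((m:ℚ)+2) *
      ((-1:ℚ)^(m+2) * gchoose (2*Q) (m+2) * gchoose (-2*Q) c *
        gchoose (-2*Q) (m+1))
    - Rr Q ((m:ℚ)+1) *
      ((-1:ℚ)^(m+1) * gchoose (2*Q) (m+1) * gchoose (-2*Q) (c+1) *
        gchoose (-2*Q) m) := by
  have hm0 : (0:ℚ) ≤ (m:ℚ) := Nat.cast_nonneg m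
  have hc0 : (0:ℚ) ≤ (c:ℚ) := Nat.cast_nonneg c
  have hc : (c:ℚ) = 2*Q - (m:ℚ) - 3 := by linarith
  have nQ : (2*Q) ≠ 0 := by intro h; nlinarith
  have n2Q1 : 2*Q+1 ≠ 0 := by intro h; nlinarith
  have n3 : 2*Q-(m:ℚ) ≠ 0 := by intro h; nlinarith
  have n4 : 2*Q-(m:ℚ)-1 ≠ 0 := by intro h; nlinarith
  have n5 : 2*Q-(m:ℚ)-2 ≠ 0 := by intro h; nlinarith
  have n6 : 2*Q+1-(m:ℚ) ≠ 0 := by intro h; nlinarith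
  have r1 : (m:ℚ)+1-2*Q ≠ 0 := by intro h; nlinarith
  have r2 : (m:ℚ)+1-2*Q-1 ≠ 0 := by intro h; nlinarith
  have r3 : (m:ℚ)+1-2*Q-2 ≠ 0 := by intro h; nlinarith
  have r4 : (m:ℚ)+2-2*Q ≠ 0 := by intro h; nlinarith
  have r5 : (m:ℚ)+2-2*Q-1 ≠ 0 := by intro h; nlinarith
  have r6 : (m:ℚ)+2-2*Q-2 ≠ 0 := by intro h; nlinarith
  have hm1 : ((m:ℚ)+1) ≠ 0 := by positivity
  have hm2 : ((m:ℚ)+2) ≠ 0 := by positivity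
  have hm3 : ((m:ℚ)+3) ≠ 0 := by positivity
  -- normalize arguments
  rw [show (2*(Q+1) : ℚ) = 2*Q+2 by ring, show (-2*(Q+1) : ℚ) = -2*Q-2 by ring]
  -- e4 : gchoose (2*Q+2) (m+1)
  have d1 := gchoose_two_step (2*Q+2) (m+1)
  rw [show (2*Q+2-2 : ℚ) = 2*Q by ring, show m+1+2 = m+3 from rfl] at d1
  have s1 := gchoose_succ (2*Q+2) (m+1)
  rw [show m+1+1 = m+2 from rfl] at s1
  have s2 := gchoose_succ (2*Q+2) (m+2)
  rw [show m+2+1 = m+3 from rfl] at s2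
  push_cast at d1 s1 s2
  have e4 : gchoose (2*Q+2) (m+1)
      = gchoose (2*Q) (m+1) * ((2*Q+2)*(2*Q+1)) / ((2*Q+1-(m:ℚ))*(2*Q-(m:ℚ))) := by
    rw [eq_div_iff (mul_ne_zero n6 n3)]
    rw [s2, s1] at d1
    have hmm : (((m:ℚ)+2)*((m:ℚ)+3)) ≠ 0 := by positivity
    apply mul_right_cancel₀ hmm
    field_simp at d1
    rw [show (2*(Q+1):ℚ) = 2*Q+2 by ring] at d1
    linear_combination ((m:ℚ)+2) * d1
  -- chain for gchoose (-2*Q-2) (c+3)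
  have b0 : gchoose (-2*Q-2) c
      = gchoose (-2*Q) (c+2) * ((2*Q-(m:ℚ)-2)*(2*Q-(m:ℚ)-1)) / ((2*Q)*(2*Q+1)) := by
    have w1 := gchoose_two_step (-2*Q) c
    rw [eq_div_iff (mul_ne_zero nQ n2Q1)]
    linear_combination -w1 + gchoose (-2*Q) (c+2) * ((c:ℚ) + 2*Q - (m:ℚ)) * hc
  have u1 : gchoose (-2*Q) (c+1)
      = gchoose (-2*Q) c * (((m:ℚ)+3-4*Q) / (2*Q-(m:ℚ)-2)) := by
    rw [gchoose_succ, hc]; ring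
  have u2 : gchoose (-2*Q) (c+2)
      = gchoose (-2*Q) (c+1) * (((m:ℚ)+2-4*Q) / (2*Q-(m:ℚ)-1)) := by
    rw [show c+2 = c+1+1 from rfl, gchoose_succ]
    push_cast [hc]; ring
  have v1 : gchoose (-2*Q-2) (c+1)
      = gchoose (-2*Q-2) c * (((m:ℚ)+1-4*Q) / (2*Q-(m:ℚ)-2)) := by
    rw [gchoose_succ, hc]; ring
  have v2 : gchoose (-2*Q-2) (c+2)
      = gchoose (-2*Q-2) (c+1) * (((m:ℚ)-4*Q) / (2*Q-(m:ℚ)-1)) := by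
    rw [show c+2 = c+1+1 from rfl, gchoose_succ]
    push_cast [hc]; ring
  have v3 : gchoose (-2*Q-2) (c+3)
      = gchoose (-2*Q-2) (c+2) * (((m:ℚ)-1-4*Q) / (2*Q-(m:ℚ))) := by
    rw [show c+3 = c+2+1 from rfl, gchoose_succ]
    push_cast [hc]; ring
  -- chain for gchoose (-2*Q-2) m
  have b1 : gchoose (-2*Q-2) m
      = gchoose (-2*Q) (m+2) * (((m:ℚ)+1)*((m:ℚ)+2)) / ((2*Q)*(2*Q+1)) := by
    have w2 := gchoose_two_step (-2*Q) m
    rw [eq_div_iff (mul_ne_zero nQ n2Q1)]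
    linear_combination -w2
  have u3 : gchoose (-2*Q) (m+1)
      = gchoose (-2*Q) m * ((-2*Q-(m:ℚ)) / ((m:ℚ)+1)) := by
    rw [gchoose_succ]; ring
  have u4 : gchoose (-2*Q) (m+2)
      = gchoose (-2*Q) (m+1) * ((-2*Q-(m:ℚ)-1) / ((m:ℚ)+2)) := by
    rw [show m+2 = m+1+1 from rfl, gchoose_succ]
    push_cast; ring
  -- e1
  have e1 : gchoose (2*Q) (m+2)
      = gchoose (2*Q) (m+1) * ((2*Q-(m:ℚ)-1) / ((m:ℚ)+2)) := by
    rw [show m+2 = m+1+1 from rfl, gchoose_succ]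
    push_cast; ring
  -- rewrite the goal
  rw [e4, v3, v2, v1, b0, u2, u1, b1, u4, u3, e1]
  unfold Rr Np
  rw [show ((-1:ℚ))^(m+2) = (-1:ℚ)^m by rw [pow_add]; norm_num,
      show ((-1:ℚ))^(m+1) = (-1:ℚ)^m * (-1) by rw [pow_add]; norm_num]
  have hQ0 : Q ≠ 0 := by intro h; nlinarith
  field_simp
  ring

def tm (p i : ℕ) : ℚ :=
  (-1 : ℚ) ^ i * gchoose (2 * p) i * gchoose (-2 * p) (2 * p - 1 - i) *
      gchoose (-2 * p) (i - 1)


set_option maxHeartbeats 1000000 in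
lemma boundary (q : ℕ) (hq : 1 ≤ q) :
    Rr (q:ℚ) (2*(q:ℚ)-1) * tm q (2*q-1)
    + (3*(3*(q:ℚ)-1)*(2*(q:ℚ)-1)*(3*(q:ℚ)+1)) * tm q (2*q-1)
    + ((2*(q:ℚ)+1)*(q:ℚ)^2) * (tm (q+1) (2*q-1) + tm (q+1) (2*q) + tm (q+1) (2*q+1)) = 0 := by
  have hq1 : (1:ℚ) ≤ (q:ℚ) := by exact_mod_cast hq
  have n1 : 2*(q:ℚ)-1 ≠ 0 := by intro h; nlinarith
  have n2 : (2:ℚ)*(q:ℚ) ≠ 0 := by positivity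
  have n3 : 2*(q:ℚ)+1 ≠ 0 := by positivity
  -- indices
  have i1 : 2*q-1-(2*q-1) = 0 := by omega
  have i2 : (2*q-1)-1 = 2*q-2 := by omega
  have i3 : 2*(q+1)-1-(2*q-1) = 2 := by omega
  have i4 : 2*(q+1)-1-(2*q) = 1 := by omega
  have i5 : (2*q)-1 = 2*q-1 := by omega
  have i6 : 2*(q+1)-1-(2*q+1) = 0 := by omega
  have i7 : (2*q+1)-1 = 2*q := by omega
  simp only [tm, i1, i2, i3, i4, i5, i6, i7]
  -- signs
  have s1 : (-1:ℚ)^(2*q-1) = -1 := Odd.neg_one_pow ⟨q-1, by omega⟩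
  have s2 : (-1:ℚ)^(2*q) = 1 := Even.neg_one_pow ⟨q, by omega⟩
  have s3 : (-1:ℚ)^(2*q+1) = -1 := Odd.neg_one_pow ⟨q, by omega⟩
  rw [s1, s2, s3]
  -- cast facts
  have c1 : ((2*q-2:ℕ):ℚ) = 2*(q:ℚ)-2 := by
    rw [Nat.cast_sub (by omega)]; push_cast; ring
  have c2 : ((2*q-1:ℕ):ℚ) = 2*(q:ℚ)-1 := by
    rw [Nat.cast_sub (by omega)]; push_cast; ring
  -- big binomials
  have ga : gchoose (2*(q:ℚ)) (2*q-1) = 2*(q:ℚ) := by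
    rw [show (2*(q:ℚ)) = ((2*q:ℕ):ℚ) by push_cast; ring, gchoose_natCast,
        Nat.choose_symm (by omega : 1 ≤ 2*q), Nat.choose_one_right]
  have hq2 : ((q+1:ℕ):ℚ) = (q:ℚ)+1 := by push_cast; ring
  have gb : gchoose (2*((q:ℚ)+1)) (2*q-1)
      = (2*(q:ℚ)+2)*(2*(q:ℚ)+1)*(2*(q:ℚ))/6 := by
    rw [show (2*((q:ℚ)+1)) = ((2*q+2:ℕ):ℚ) by push_cast; ring, gchoose_natCast]
    have hsym : (2*q+2).choose (2*q-1) = (2*q+2).choose 3 := by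
      rw [show 2*q-1 = 2*q+2-3 by omega]; exact Nat.choose_symm (by omega)
    rw [hsym, ← gchoose_natCast, gchoose_three]
    push_cast; ring
  have gc : gchoose (2*((q:ℚ)+1)) (2*q)
      = (2*(q:ℚ)+2)*(2*(q:ℚ)+1)/2 := by
    rw [show (2*((q:ℚ)+1)) = ((2*q+2:ℕ):ℚ) by push_cast; ring, gchoose_natCast]
    have hsym : (2*q+2).choose (2*q) = (2*q+2).choose 2 := by
      rw [show 2*q = 2*q+2-2 by omega]; exact Nat.choose_symm (by omega)
    rw [hsym, ← gchoose_natCast, gchoose_two]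
    push_cast; ring
  have gd : gchoose (2*((q:ℚ)+1)) (2*q+1) = 2*(q:ℚ)+2 := by
    rw [show (2*((q:ℚ)+1)) = ((2*q+2:ℕ):ℚ) by push_cast; ring, gchoose_natCast]
    have hsym : (2*q+2).choose (2*q+1) = (2*q+2).choose 1 := by
      rw [show 2*q+1 = 2*q+2-1 by omega]; exact Nat.choose_symm (by omega)
    rw [hsym, Nat.choose_one_right]
    push_cast; ring
  -- normalize -2*(q+1) argument
  rw [hq2]
  rw [show (-2*((q:ℚ)+1)) = -2*(q:ℚ)-2 by ring]
  -- Y chain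
  have y1 : gchoose (-2*(q:ℚ)) (2*q-1)
      = gchoose (-2*(q:ℚ)) (2*q-2) * ((2-4*(q:ℚ))/(2*(q:ℚ)-1)) := by
    have h := gchoose_succ (-2*(q:ℚ)) (2*q-2)
    rw [show 2*q-2+1 = 2*q-1 by omega] at h
    rw [h, c1]; ring
  have y2 : gchoose (-2*(q:ℚ)) (2*q)
      = gchoose (-2*(q:ℚ)) (2*q-1) * ((1-4*(q:ℚ))/(2*(q:ℚ))) := by
    have h := gchoose_succ (-2*(q:ℚ)) (2*q-1)
    rw [show 2*q-1+1 = 2*q by omega] at h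
    rw [h, c2]; ring
  have z0 : gchoose (-2*(q:ℚ)-2) (2*q-2)
      = gchoose (-2*(q:ℚ)) (2*q) * ((2*(q:ℚ)-1)*(2*(q:ℚ)))/((2*(q:ℚ))*(2*(q:ℚ)+1)) := by
    have h := gchoose_two_step (-2*(q:ℚ)) (2*q-2)
    rw [show 2*q-2+2 = 2*q by omega, c1] at h
    rw [eq_div_iff (mul_ne_zero n2 n3)]
    linear_combination -h
  have z1 : gchoose (-2*(q:ℚ)-2) (2*q-1)
      = gchoose (-2*(q:ℚ)-2) (2*q-2) * ((-4*(q:ℚ))/(2*(q:ℚ)-1)) := by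
    have h := gchoose_succ (-2*(q:ℚ)-2) (2*q-2)
    rw [show 2*q-2+1 = 2*q-1 by omega] at h
    rw [h, c1]; ring
  have z2 : gchoose (-2*(q:ℚ)-2) (2*q)
      = gchoose (-2*(q:ℚ)-2) (2*q-1) * ((-4*(q:ℚ)-1)/(2*(q:ℚ))) := by
    have h := gchoose_succ (-2*(q:ℚ)-2) (2*q-1)
    rw [show 2*q-1+1 = 2*q by omega] at h
    rw [h, c2]; ring
  rw [ga, gb, gc, gd, z2, z1, z0, y2, y1]
  simp only [gchoose_zero, gchoose_one, gchoose_two]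
  unfold Rr Np
  field_simp
  ring

lemma np_one (q : ℚ) : Np q 1 = 0 := by unfold Np; ring

lemma sum_step (q d : ℕ) (hq : 1 ≤ q) (hd : d + 1 ≤ 2*q - 1) :
    ∑ j ∈ Finset.Icc 1 d,
      (((2*(q:ℚ)+1)*(q:ℚ)^2) * tm (q+1) j
        + (3*(3*(q:ℚ)-1)*(2*(q:ℚ)-1)*(3*(q:ℚ)+1)) * tm q j)
    = Rr (q:ℚ) ((d:ℚ)+1) * tm q (d+1) := by
  induction d with
  | zero =>
    rw [Finset.Icc_eq_empty (by omega), Finset.sum_empty]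
    have h0 : Np (q:ℚ) (((0:ℕ):ℚ)+1) = 0 := by norm_num [np_one]
    unfold Rr
    rw [h0, zero_div, zero_mul]
  | succ d IH =>
    obtain ⟨c, hc2⟩ : ∃ c, 2*q = d + c + 3 := ⟨2*q-3-d, by omega⟩
    have hQc : 2*(q:ℚ) = (d:ℚ)+(c:ℚ)+3 := by exact_mod_cast hc2
    rw [Finset.sum_Icc_succ_top (by omega : 1 ≤ d+1), IH (by omega)]
    have i1 : 2*q-1-(d+1) = c+1 := by omega
    have i2 : (d+1)-1 = d := by omega
    have i3 : 2*q-1-(d+2) = c := by omega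
    have i4 : (d+2)-1 = d+1 := by omega
    have i5 : 2*(q+1)-1-(d+1) = c+3 := by omega
    rw [show d+1+1 = d+2 from rfl]
    simp only [tm, i1, i2, i3, i4, i5]
    push_cast
    rw [show (d:ℚ)+1+1 = (d:ℚ)+2 by ring]
    linear_combination key d c (q:ℚ) hQc

lemma f_eq (p : ℕ) : f p = ∑ i ∈ Finset.Icc 1 (2 * p - 1), tm p i := rfl

lemma main_rec (q : ℕ) (hq : 1 ≤ q) :
    3*(3*(q:ℚ)-1)*(2*(q:ℚ)-1)*(3*(q:ℚ)+1) * f q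
      + (2*(q:ℚ)+1)*(q:ℚ)^2 * f (q+1) = 0 := by
  have hfq : f q = (∑ j ∈ Finset.Icc 1 (2*q-2), tm q j) + tm q (2*q-1) := by
    rw [f_eq, show 2*q-1 = (2*q-2)+1 by omega, Finset.sum_Icc_succ_top (by omega)]
  have hfq1 : f (q+1) = (∑ j ∈ Finset.Icc 1 (2*q-2), tm (q+1) j)
      + tm (q+1) (2*q-1) + tm (q+1) (2*q) + tm (q+1) (2*q+1) := by
    rw [f_eq, show 2*(q+1)-1 = ((2*q-2)+1+1)+1 by omega]
    rw [Finset.sum_Icc_succ_top (by omega), Finset.sum_Icc_succ_top (by omega),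
        Finset.sum_Icc_succ_top (by omega)]
    rw [show 2*q-2+1+1+1 = 2*q+1 by omega, show 2*q-2+1+1 = 2*q by omega,
        show 2*q-2+1 = 2*q-1 by omega]
  have hsum := sum_step q (2*q-2) hq (by omega)
  rw [show 2*q-2+1 = 2*q-1 by omega] at hsum
  have hcast : ((2*q-2:ℕ):ℚ)+1 = 2*(q:ℚ)-1 := by
    rw [Nat.cast_sub (by omega)]; push_cast; ring
  rw [hcast] at hsum
  have hb := boundary q hq
  rw [hfq, hfq1]
  have hsplit : ∑ j ∈ Finset.Icc 1 (2*q-2),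
      (((2*(q:ℚ)+1)*(q:ℚ)^2) * tm (q+1) j
        + (3*(3*(q:ℚ)-1)*(2*(q:ℚ)-1)*(3*(q:ℚ)+1)) * tm q j)
      = ((2*(q:ℚ)+1)*(q:ℚ)^2) * ∑ j ∈ Finset.Icc 1 (2*q-2), tm (q+1) j
        + (3*(3*(q:ℚ)-1)*(2*(q:ℚ)-1)*(3*(q:ℚ)+1)) * ∑ j ∈ Finset.Icc 1 (2*q-2), tm q j := by
    rw [Finset.sum_add_distrib, ← Finset.mul_sum, ← Finset.mul_sum]
  linear_combination hb + hsum - hsplit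

/-- For every integer `p ≥ 2`,
`3(3p-4)(2p-3)(3p-2) f(p-1) + (2p-1)(p-1)^2 f(p) = 0`. -/
theorem stmt3 (p : ℕ) (hp : 2 ≤ p) :
    3 * (3 * (p : ℚ) - 4) * (2 * (p : ℚ) - 3) * (3 * (p : ℚ) - 2) * f (p - 1)
      + (2 * (p : ℚ) - 1) * ((p : ℚ) - 1) ^ 2 * f p = 0 := by
  obtain ⟨q, rfl⟩ : ∃ q, p = q+1 := ⟨p-1, by omega⟩
  have hq : 1 ≤ q := by omega
  have h := main_rec q hq
  rw [show q+1-1 = q from rfl]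
  push_cast
  linear_combination h
end
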